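/- arXiv:1603.06088 — 3 statements merged into one kernel-verified Lean document; each statement's English description precedes it below -/
import Mathlib

section
/- For every n ≥ 2 and every σ ∈ (0,1) there exists a measurable set E ⊆ ℝⁿ, which is a countable union of open balls any two of which are at distance at least 1/2 from each other, such that P_s(E) < ∞ for every s ∈ (0,σ) and P_s(E) = ∞ for every s ∈ [σ,1). -/
open MeasureTheory Metric Set Filter Bornology
open scoped ENNReal Topology

/-- The fractional kernel `|x-y|^{-(n+s)}` as an extended nonnegative real. -/
noncomputable def fracKer (n : ℕ) (s : ℝ) (x y : EuclideanSpace ℝ (Fin n)) : ℝ≥0∞ :=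
  ENNReal.ofReal (‖x - y‖ ^ (-((n : ℝ) + s)))

/-- The interaction `L_s(A,B) = ∫_A ∫_B |x-y|^{-(n+s)} dy dx`. -/
noncomputable def interL (n : ℕ) (s : ℝ) (A B : Set (EuclideanSpace ℝ (Fin n))) : ℝ≥0∞ :=
  ∫⁻ x in A, ∫⁻ y in B, fracKer n s x y

/-- The local part of the `s`-fractional perimeter of `E` in `Ω`. -/
noncomputable def perL (n : ℕ) (s : ℝ) (E Ω : Set (EuclideanSpace ℝ (Fin n))) : ℝ≥0∞ :=
  interL n s (E ∩ Ω) (Eᶜ ∩ Ω)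

/-- The nonlocal part of the `s`-fractional perimeter of `E` in `Ω`. -/
noncomputable def perNL (n : ℕ) (s : ℝ) (E Ω : Set (EuclideanSpace ℝ (Fin n))) : ℝ≥0∞ :=
  interL n s (E ∩ Ω) (Eᶜ \ Ω) + interL n s (E \ Ω) (Eᶜ ∩ Ω)

/-- The `s`-fractional perimeter of `E` in `Ω`. -/
noncomputable def per (n : ℕ) (s : ℝ) (E Ω : Set (EuclideanSpace ℝ (Fin n))) : ℝ≥0∞ :=
  interL n s (E ∩ Ω) (Eᶜ ∩ Ω) + interL n s (E ∩ Ω) (Eᶜ \ Ω) + interL n s (E \ Ω) (Eᶜ ∩ Ω)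

/-- The global `s`-fractional perimeter `P_s(E) = L_s(E, Eᶜ)`. -/
noncomputable def perG (n : ℕ) (s : ℝ) (E : Set (EuclideanSpace ℝ (Fin n))) : ℝ≥0∞ :=
  interL n s E Eᶜ

/-- The measure theoretic boundary `∂⁻E`. Note `volume (ball x r) = ω_n rⁿ`. -/
def mtb (n : ℕ) (E : Set (EuclideanSpace ℝ (Fin n))) : Set (EuclideanSpace ℝ (Fin n)) :=
  {x | ∀ r > (0 : ℝ), 0 < volume (E ∩ ball x r) ∧ volume (E ∩ ball x r) < volume (ball x r)}

/-- `E` has locally finite `s`-perimeter: finite `s`-perimeter in every bounded open set. -/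
def locFinPer (n : ℕ) (s : ℝ) (E : Set (EuclideanSpace ℝ (Fin n))) : Prop :=
  ∀ Ω : Set (EuclideanSpace ℝ (Fin n)), IsOpen Ω → IsBounded Ω → per n s E Ω < ⊤

/-! ### Auxiliary lemmas -/

/-- The volume of the unit ball. -/
noncomputable abbrev Vb (n : ℕ) : ℝ≥0∞ := volume (ball (0 : EuclideanSpace ℝ (Fin n)) 1)

lemma vol_ball {n : ℕ} (hn : 1 ≤ n) (x : EuclideanSpace ℝ (Fin n)) {r : ℝ} (hr : 0 ≤ r) :
    volume (ball x r) = ENNReal.ofReal (r ^ n) * Vb n := by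
  haveI : Nonempty (Fin n) := Fin.pos_iff_nonempty.mp hn
  haveI : Nontrivial (EuclideanSpace ℝ (Fin n)) := inferInstance
  rw [Measure.addHaar_ball volume x hr, finrank_euclideanSpace_fin]

lemma key1 {n : ℕ} {s δ : ℝ} (hδ : 0 < δ) (k : ℕ) :
    ((2:ℝ)^k * δ) ^ (-((n:ℝ)+s)) * ((2:ℝ)^(k+1) * δ)^n
      = 2^n * (δ ^ (-s)) * ((2:ℝ)^(-s))^k := by
  have ha : (0:ℝ) < 2^k * δ := by positivity
  have h2 : ((2:ℝ)^(k+1) * δ)^n = 2^n * ((2:ℝ)^k * δ)^n := by ring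
  rw [h2]
  have h3 : ((2:ℝ)^k * δ) ^ (-((n:ℝ)+s)) * ((2:ℝ)^k * δ)^n
      = ((2:ℝ)^k * δ) ^ (-s) := by
    rw [← Real.rpow_natCast ((2:ℝ)^k*δ) n, ← Real.rpow_add ha]
    ring_nf
  have h4 : ((2:ℝ)^k * δ) ^ (-s) = ((2:ℝ)^(-s))^k * δ ^ (-s) := by
    rw [Real.mul_rpow (by positivity) hδ.le]
    congr 1
    rw [← Real.rpow_natCast (2:ℝ) k, ← Real.rpow_natCast ((2:ℝ)^(-s)) k,
      ← Real.rpow_mul (by norm_num : (0:ℝ) ≤ 2), ← Real.rpow_mul (by norm_num : (0:ℝ) ≤ 2),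
      mul_comm]
  calc ((2:ℝ)^(k)*δ)^(-((n:ℝ)+s)) * (2^n * ((2:ℝ)^k * δ)^n)
      = 2^n * (((2:ℝ)^k*δ)^(-((n:ℝ)+s)) * ((2:ℝ)^k * δ)^n) := by ring
    _ = 2^n * (((2:ℝ)^(-s))^k * δ ^ (-s)) := by rw [h3, h4]
    _ = _ := by ring

/-- Tail bound: the integral of the kernel outside a ball of radius `δ`. -/
lemma tail_bound {n : ℕ} (hn : 1 ≤ n) {s : ℝ} (hs : 0 < s) (x : EuclideanSpace ℝ (Fin n))
    {δ : ℝ} (hδ : 0 < δ) :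
    ∫⁻ y in (ball x δ)ᶜ, fracKer n s x y ≤
      Vb n * ENNReal.ofReal ((2:ℝ) ^ n) * (1 - ENNReal.ofReal ((2:ℝ) ^ (-s)))⁻¹ *
        ENNReal.ofReal (δ ^ (-s)) := by
  classical
  set S : ℕ → Set (EuclideanSpace ℝ (Fin n)) :=
    fun k => ball x (2^(k+1) * δ) \ ball x (2^k * δ) with hS
  have cover : (ball x δ)ᶜ ⊆ ⋃ k, S k := by
    intro y hy
    have hyd : δ ≤ dist y x := by simpa [mem_ball, not_lt] using hy
    have hex : ∃ k : ℕ, dist y x < 2^(k+1) * δ := by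
      obtain ⟨k, hk⟩ := pow_unbounded_of_one_lt (dist y x / δ) (one_lt_two (α := ℝ))
      refine ⟨k, ?_⟩
      have h1 : dist y x < 2^k * δ := by
        rw [div_lt_iff₀ hδ] at hk; linarith [hk]
      have h2 : (2:ℝ)^k * δ ≤ 2^(k+1) * δ := by
        have : (2:ℝ)^k ≤ 2^(k+1) := by
          apply pow_le_pow_right₀ (by norm_num) (by omega)
        nlinarith
      linarith
    refine mem_iUnion.2 ⟨Nat.find hex, ?_⟩
    constructor
    · exact mem_ball.2 (Nat.find_spec hex)
    · intro hmem
      rw [mem_ball] at hmem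
      rcases Nat.eq_zero_or_pos (Nat.find hex) with h | h
      · rw [h] at hmem; simp at hmem; linarith
      · have := Nat.find_min hex (m := Nat.find hex - 1) (by omega)
        rw [not_lt] at this
        have heq : Nat.find hex - 1 + 1 = Nat.find hex := by omega
        rw [heq] at this
        linarith
  have termbound : ∀ k : ℕ, ∫⁻ y in S k, fracKer n s x y ≤
      (Vb n * ENNReal.ofReal ((2:ℝ)^n) * ENNReal.ofReal (δ ^ (-s))) *
        (ENNReal.ofReal ((2:ℝ)^(-s)))^k := by
    intro k
    have hmeas : MeasurableSet (S k) := measurableSet_ball.diff measurableSet_ball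
    have pt : ∀ y ∈ S k, fracKer n s x y ≤
        ENNReal.ofReal (((2:ℝ)^k * δ) ^ (-((n:ℝ)+s))) := by
      intro y hy
      have h1 : (2:ℝ)^k * δ ≤ ‖x - y‖ := by
        have h := hy.2
        rw [mem_ball, not_lt] at h
        calc (2:ℝ)^k*δ ≤ dist y x := h
          _ = ‖x - y‖ := by rw [dist_eq_norm, norm_sub_rev]
      exact ENNReal.ofReal_le_ofReal
        (Real.rpow_le_rpow_of_nonpos (by positivity) h1 (neg_nonpos.mpr (by positivity)))
    calc ∫⁻ y in S k, fracKer n s x y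
        ≤ ∫⁻ _ in S k, ENNReal.ofReal (((2:ℝ)^k * δ) ^ (-((n:ℝ)+s))) :=
          setLIntegral_mono' hmeas pt
      _ = ENNReal.ofReal (((2:ℝ)^k * δ) ^ (-((n:ℝ)+s))) * volume (S k) :=
          setLIntegral_const _ _
      _ ≤ ENNReal.ofReal (((2:ℝ)^k * δ) ^ (-((n:ℝ)+s))) * volume (ball x (2^(k+1) * δ)) := by
          gcongr
          exact fun y hy => hy.1
      _ = ENNReal.ofReal (((2:ℝ)^k * δ) ^ (-((n:ℝ)+s))) *
            (ENNReal.ofReal (((2:ℝ)^(k+1) * δ) ^ n) * Vb n) := by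
          rw [vol_ball hn x (by positivity)]
      _ = (Vb n * ENNReal.ofReal ((2:ℝ)^n) * ENNReal.ofReal (δ ^ (-s))) *
            (ENNReal.ofReal ((2:ℝ)^(-s)))^k := by
          rw [← ENNReal.ofReal_pow (by positivity), ← mul_assoc,
            ← ENNReal.ofReal_mul (by positivity), key1 hδ,
            ENNReal.ofReal_mul (by positivity), ENNReal.ofReal_mul (by positivity)]
          ring
  calc ∫⁻ y in (ball x δ)ᶜ, fracKer n s x y
      ≤ ∫⁻ y in ⋃ k, S k, fracKer n s x y := lintegral_mono_set cover
    _ ≤ ∑' k, ∫⁻ y in S k, fracKer n s x y := lintegral_iUnion_le _ _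
    _ ≤ ∑' k, (Vb n * ENNReal.ofReal ((2:ℝ)^n) * ENNReal.ofReal (δ ^ (-s))) *
          (ENNReal.ofReal ((2:ℝ)^(-s)))^k := ENNReal.tsum_le_tsum termbound
    _ = (Vb n * ENNReal.ofReal ((2:ℝ)^n) * ENNReal.ofReal (δ ^ (-s))) *
          (1 - ENNReal.ofReal ((2:ℝ)^(-s)))⁻¹ := by
        rw [ENNReal.tsum_mul_left, ENNReal.tsum_geometric]
    _ = _ := by ring

lemma key2 {n : ℕ} {s r : ℝ} (hr : 0 < r) (k : ℕ) :
    (((1/2:ℝ))^(k+1) * r) ^ (-s) * ((n:ℝ) * ((1/2:ℝ))^k * r^n)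
      = ((n:ℝ) * (2:ℝ)^s * r^((n:ℝ)-s)) * ((2:ℝ)^(s-1))^k := by
  have h2 : (0:ℝ) ≤ 2 := by norm_num
  have hhalf : ∀ m : ℕ, ((1/2:ℝ))^m = (2:ℝ)^(-(m:ℝ)) := by
    intro m; rw [one_div, inv_pow, Real.rpow_neg h2, Real.rpow_natCast]
  have e1 : (((1/2:ℝ))^(k+1) * r) ^ (-s)
      = (2:ℝ)^(((k:ℝ)+1)*s) * r ^ (-s) := by
    rw [Real.mul_rpow (by positivity) hr.le, hhalf, ← Real.rpow_mul h2]
    push_cast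
    ring_nf
  have e2 : ((2:ℝ)^(s-1))^k = (2:ℝ)^((s-1)*(k:ℝ)) := by
    rw [← Real.rpow_natCast ((2:ℝ)^(s-1)) k, ← Real.rpow_mul h2]
  calc (((1/2:ℝ))^(k+1) * r) ^ (-s) * ((n:ℝ) * ((1/2:ℝ))^k * r^n)
      = (n:ℝ) * ((2:ℝ)^(((k:ℝ)+1)*s) * (2:ℝ)^(-(k:ℝ))) * (r ^ (-s) * r^((n:ℝ))) := by
        rw [e1, hhalf, ← Real.rpow_natCast r n]; ring
    _ = (n:ℝ) * (2:ℝ)^(((k:ℝ)+1)*s + -(k:ℝ)) * r^(-s + (n:ℝ)) := by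
        rw [← Real.rpow_add (by norm_num : (0:ℝ) < 2), ← Real.rpow_add hr]
    _ = (n:ℝ) * ((2:ℝ)^(s + (s-1)*(k:ℝ))) * r^((n:ℝ)-s) := by
        rw [show ((k:ℝ)+1)*s + -(k:ℝ) = s + (s-1)*(k:ℝ) by ring,
            show -s + (n:ℝ) = (n:ℝ) - s by ring]
    _ = _ := by rw [e2, Real.rpow_add (by norm_num : (0:ℝ) < 2)]; ring

/-- Boundary layer bound: integral of `(r - ‖x-c‖)^(-s)` over the ball. -/
lemma layer_bound {n : ℕ} (hn : 1 ≤ n) {s : ℝ} (hs0 : 0 < s)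
    (c : EuclideanSpace ℝ (Fin n)) {r : ℝ} (hr : 0 < r) :
    ∫⁻ x in ball c r, ENNReal.ofReal ((r - ‖x - c‖) ^ (-s)) ≤
      Vb n * ENNReal.ofReal ((n:ℝ) * 2 ^ s * r ^ ((n:ℝ) - s)) *
        (1 - ENNReal.ofReal ((2:ℝ)^(s-1)))⁻¹ := by
  classical
  set W : ℕ → Set (EuclideanSpace ℝ (Fin n)) :=
    fun k => ball c ((1 - (1/2:ℝ)^(k+1)) * r) \ ball c ((1 - (1/2:ℝ)^k) * r) with hW
  have cover : ball c r ⊆ ⋃ k, W k := by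
    intro x hx
    rw [mem_ball, dist_eq_norm] at hx
    have hex : ∃ k : ℕ, ‖x - c‖ < (1 - (1/2:ℝ)^(k+1)) * r := by
      obtain ⟨m, hm⟩ := exists_pow_lt_of_lt_one (x := (r - ‖x-c‖)/r)
        (div_pos (by linarith) hr) (by norm_num : (1/2:ℝ) < 1)
      refine ⟨m, ?_⟩
      have hm' : (1/2:ℝ)^m * r < r - ‖x - c‖ := by
        rw [lt_div_iff₀ hr] at hm; linarith
      have h1 : ((1/2:ℝ))^(m+1) ≤ (1/2)^m :=
        pow_le_pow_of_le_one (by norm_num) (by norm_num) (by omega)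
      nlinarith
    refine mem_iUnion.2 ⟨Nat.find hex, ⟨?_, ?_⟩⟩
    · exact mem_ball.2 (by rw [dist_eq_norm]; exact Nat.find_spec hex)
    · intro hmem
      rw [mem_ball, dist_eq_norm] at hmem
      rcases Nat.eq_zero_or_pos (Nat.find hex) with h | h
      · rw [h] at hmem; norm_num at hmem
        linarith [norm_nonneg (x - c)]
      · have hmin := Nat.find_min hex (m := Nat.find hex - 1) (by omega)
        rw [not_lt] at hmin
        have heq : Nat.find hex - 1 + 1 = Nat.find hex := by omega
        rw [heq] at hmin; linarith
  have termbound : ∀ k, ∫⁻ x in W k, ENNReal.ofReal ((r - ‖x - c‖) ^ (-s)) ≤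
      (Vb n * ENNReal.ofReal ((n:ℝ) * 2^s * r^((n:ℝ)-s))) * (ENNReal.ofReal ((2:ℝ)^(s-1)))^k := by
    intro k
    have hmeas : MeasurableSet (W k) := measurableSet_ball.diff measurableSet_ball
    have hpowpos : (0:ℝ) < (1/2)^(k+1) := by positivity
    have hpowpos' : (0:ℝ) < (1/2)^k := by positivity
    have hpow1 : ((1/2:ℝ))^k ≤ 1 := pow_le_one₀ (by norm_num) (by norm_num)
    have hpow1' : ((1/2:ℝ))^(k+1) ≤ 1 := pow_le_one₀ (by norm_num) (by norm_num)
    have tk_nonneg : 0 ≤ (1 - (1/2:ℝ)^k) * r := by nlinarith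
    have hsub : ball c ((1 - (1/2:ℝ)^k) * r) ⊆ ball c r :=
      ball_subset_ball (by nlinarith)
    have hW1 : W k ⊆ ball c r \ ball c ((1 - (1/2:ℝ)^k) * r) := by
      intro y hy
      exact ⟨mem_ball.2 (lt_of_lt_of_le (mem_ball.1 hy.1) (by nlinarith)), hy.2⟩
    have bern : (1:ℝ) - (n:ℝ)*(1/2)^k ≤ (1 - (1/2:ℝ)^k)^n := by
      have := one_add_mul_le_pow (a := -((1/2:ℝ)^k)) (by nlinarith) n
      calc (1:ℝ) - (n:ℝ)*(1/2)^k = 1 + (n:ℝ) * (-((1/2:ℝ)^k)) := by ring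
        _ ≤ (1 + -((1/2:ℝ)^k))^n := this
        _ = (1 - (1/2:ℝ)^k)^n := by ring_nf
    have hvol : volume (W k) ≤ ENNReal.ofReal ((n:ℝ) * (1/2)^k * r^n) * Vb n := by
      calc volume (W k) ≤ volume (ball c r \ ball c ((1 - (1/2:ℝ)^k) * r)) := measure_mono hW1
        _ = volume (ball c r) - volume (ball c ((1 - (1/2:ℝ)^k) * r)) :=
            measure_diff hsub measurableSet_ball.nullMeasurableSet measure_ball_lt_top.ne
        _ = ENNReal.ofReal (r^n) * Vb n - ENNReal.ofReal (((1 - (1/2:ℝ)^k) * r)^n) * Vb n := by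
            rw [vol_ball hn c hr.le, vol_ball hn c tk_nonneg]
        _ ≤ ENNReal.ofReal ((n:ℝ) * (1/2)^k * r^n) * Vb n := by
            rw [tsub_le_iff_right, ← add_mul, ← ENNReal.ofReal_add (by positivity) (by positivity)]
            gcongr
            calc r^n = (n:ℝ)*(1/2)^k*r^n + (1 - (n:ℝ)*(1/2)^k) * r^n := by ring
              _ ≤ (n:ℝ)*(1/2)^k*r^n + ((1 - (1/2:ℝ)^k))^n * r^n := by
                  have hrn : (0:ℝ) ≤ r^n := by positivity
                  nlinarith
              _ = (n:ℝ)*(1/2)^k*r^n + ((1 - (1/2:ℝ)^k) * r)^n := by rw [mul_pow]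
    have pt : ∀ y ∈ W k, ENNReal.ofReal ((r - ‖y - c‖) ^ (-s)) ≤
        ENNReal.ofReal (((1/2:ℝ)^(k+1) * r) ^ (-s)) := by
      intro y hy
      have h1 : ‖y - c‖ < (1 - (1/2:ℝ)^(k+1)) * r := by
        have := mem_ball.1 hy.1; rwa [dist_eq_norm] at this
      have h2 : (1/2:ℝ)^(k+1) * r ≤ r - ‖y - c‖ := by nlinarith
      exact ENNReal.ofReal_le_ofReal
        (Real.rpow_le_rpow_of_nonpos (by positivity) h2 (neg_nonpos.mpr hs0.le))
    calc ∫⁻ x in W k, ENNReal.ofReal ((r - ‖x - c‖) ^ (-s))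
        ≤ ∫⁻ _ in W k, ENNReal.ofReal (((1/2:ℝ)^(k+1) * r) ^ (-s)) :=
          setLIntegral_mono' hmeas pt
      _ = ENNReal.ofReal (((1/2:ℝ)^(k+1) * r) ^ (-s)) * volume (W k) := setLIntegral_const _ _
      _ ≤ ENNReal.ofReal (((1/2:ℝ)^(k+1) * r) ^ (-s)) *
            (ENNReal.ofReal ((n:ℝ) * (1/2)^k * r^n) * Vb n) := by gcongr
      _ = (Vb n * ENNReal.ofReal ((n:ℝ) * 2^s * r^((n:ℝ)-s))) * (ENNReal.ofReal ((2:ℝ)^(s-1)))^k := by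
          rw [← mul_assoc, ← ENNReal.ofReal_mul (by positivity), key2 hr,
            ENNReal.ofReal_mul (by positivity), ← ENNReal.ofReal_pow (by positivity)]
          ring
  calc ∫⁻ x in ball c r, ENNReal.ofReal ((r - ‖x - c‖) ^ (-s))
      ≤ ∫⁻ x in ⋃ k, W k, ENNReal.ofReal ((r - ‖x - c‖) ^ (-s)) := lintegral_mono_set cover
    _ ≤ ∑' k, ∫⁻ x in W k, ENNReal.ofReal ((r - ‖x - c‖) ^ (-s)) := lintegral_iUnion_le _ _
    _ ≤ ∑' k, (Vb n * ENNReal.ofReal ((n:ℝ) * 2^s * r^((n:ℝ)-s))) *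
          (ENNReal.ofReal ((2:ℝ)^(s-1)))^k := ENNReal.tsum_le_tsum termbound
    _ = _ := by rw [ENNReal.tsum_mul_left, ENNReal.tsum_geometric]

/-- Upper bound on the global fractional perimeter of a single ball. -/
lemma ball_perG {n : ℕ} (hn : 1 ≤ n) {s : ℝ} (hs0 : 0 < s) (hs1 : s < 1)
    (c : EuclideanSpace ℝ (Fin n)) {r : ℝ} (hr : 0 < r) :
    interL n s (ball c r) (ball c r)ᶜ ≤
      ((Vb n * ENNReal.ofReal ((2:ℝ)^n) * (1 - ENNReal.ofReal ((2:ℝ)^(-s)))⁻¹) *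
        (Vb n * ENNReal.ofReal ((n:ℝ) * 2^s) * (1 - ENNReal.ofReal ((2:ℝ)^(s-1)))⁻¹)) *
        ENNReal.ofReal (r ^ ((n:ℝ) - s)) := by
  have hq1 : ENNReal.ofReal ((2:ℝ)^(-s)) < 1 := by
    rw [← ENNReal.ofReal_one]
    exact ENNReal.ofReal_lt_ofReal_iff_of_nonneg (by positivity) |>.mpr
      (Real.rpow_lt_one_of_one_lt_of_neg one_lt_two (by linarith))
  have hK1top : Vb n * ENNReal.ofReal ((2:ℝ)^n) * (1 - ENNReal.ofReal ((2:ℝ)^(-s)))⁻¹ ≠ ⊤ := by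
    apply (ENNReal.mul_lt_top (ENNReal.mul_lt_top measure_ball_lt_top ENNReal.ofReal_lt_top) _).ne
    rw [ENNReal.inv_lt_top]
    exact tsub_pos_of_lt hq1
  set K1 := Vb n * ENNReal.ofReal ((2:ℝ)^n) * (1 - ENNReal.ofReal ((2:ℝ)^(-s)))⁻¹ with hK1
  have inner : ∀ x ∈ ball c r, ∫⁻ y in (ball c r)ᶜ, fracKer n s x y ≤
      K1 * ENNReal.ofReal ((r - ‖x - c‖) ^ (-s)) := by
    intro x hx
    rw [mem_ball, dist_eq_norm] at hx
    have hδ : 0 < r - ‖x - c‖ := by linarith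
    have hsub : (ball c r)ᶜ ⊆ (ball x (r - ‖x - c‖))ᶜ := by
      intro y hy hy2
      apply hy
      rw [mem_ball] at hy2 ⊢
      calc dist y c ≤ dist y x + dist x c := dist_triangle _ _ _
        _ < (r - ‖x - c‖) + ‖x - c‖ := by
            rw [show dist x c = ‖x - c‖ from dist_eq_norm x c]
            linarith [hy2]
        _ = r := by ring
    calc ∫⁻ y in (ball c r)ᶜ, fracKer n s x y
        ≤ ∫⁻ y in (ball x (r - ‖x-c‖))ᶜ, fracKer n s x y := lintegral_mono_set hsub
      _ ≤ K1 * ENNReal.ofReal ((r - ‖x - c‖) ^ (-s)) := tail_bound hn hs0 x hδ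
  calc interL n s (ball c r) (ball c r)ᶜ
      ≤ ∫⁻ x in ball c r, K1 * ENNReal.ofReal ((r - ‖x - c‖) ^ (-s)) :=
        setLIntegral_mono' measurableSet_ball inner
    _ = K1 * ∫⁻ x in ball c r, ENNReal.ofReal ((r - ‖x - c‖) ^ (-s)) :=
        lintegral_const_mul' _ _ hK1top
    _ ≤ K1 * (Vb n * ENNReal.ofReal ((n:ℝ) * 2^s * r^((n:ℝ)-s)) *
          (1 - ENNReal.ofReal ((2:ℝ)^(s-1)))⁻¹) := by
        gcongr
        exact layer_bound hn hs0 c hr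
    _ = _ := by
        rw [ENNReal.ofReal_mul (by positivity)]
        ring

lemma not_summable_shift_rpow {p : ℝ} (hp : -1 ≤ p) :
    ¬ Summable (fun i : ℕ => ((i:ℝ)+1) ^ p) := by
  intro h
  have h2 : Summable (fun i : ℕ => ((i:ℝ)) ^ p) := by
    have := (summable_nat_add_iff (f := fun i : ℕ => ((i:ℝ)) ^ p) 1).mpr
    apply (summable_nat_add_iff 1).mp
    apply h.congr
    intro i
    push_cast
    ring_nf
  rw [Real.summable_nat_rpow] at h2
  linarith

lemma summable_shift_rpow {p : ℝ} (hp : p < -1) :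
    Summable (fun i : ℕ => ((i:ℝ)+1) ^ p) := by
  have h2 : Summable (fun i : ℕ => ((i:ℝ)) ^ p) := Real.summable_nat_rpow.mpr hp
  have := (summable_nat_add_iff (f := fun i : ℕ => ((i:ℝ)) ^ p) 1).mpr h2
  apply this.congr
  intro i
  push_cast
  ring_nf

/-- For every `n ≥ 2` and `σ ∈ (0,1)` there is a countable union of
open balls, any two at distance at least `1/2` from each other, whose global
`s`-perimeter is finite for `s ∈ (0,σ)` and infinite for `s ∈ [σ,1)`. -/
theorem exists_set_perG_finite_iff_lt (n : ℕ) (hn : 2 ≤ n) (σ : ℝ)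
    (hσ : σ ∈ Set.Ioo (0 : ℝ) 1) :
    ∃ (c : ℕ → EuclideanSpace ℝ (Fin n)) (r : ℕ → ℝ),
      (∀ i, 0 < r i) ∧
      (∀ i j, i ≠ j → ∀ x ∈ ball (c i) (r i), ∀ y ∈ ball (c j) (r j),
        (1 : ℝ) / 2 ≤ dist x y) ∧
      (∀ s ∈ Set.Ioo (0 : ℝ) σ, perG n s (⋃ i, ball (c i) (r i)) < ⊤) ∧
      (∀ s ∈ Set.Ico σ (1 : ℝ), perG n s (⋃ i, ball (c i) (r i)) = ⊤) := by
  obtain ⟨hσ0, hσ1⟩ := hσ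
  have hn1 : 1 ≤ n := by omega
  haveI : Nonempty (Fin n) := Fin.pos_iff_nonempty.mp hn1
  set e : EuclideanSpace ℝ (Fin n) := EuclideanSpace.single ⟨0, by omega⟩ (1:ℝ) with he
  have hne : ‖e‖ = 1 := by rw [he, EuclideanSpace.norm_single]; norm_num
  set α : ℝ := 1 / ((n:ℝ) - σ) with hα
  have hn2 : (2:ℝ) ≤ (n:ℝ) := by exact_mod_cast hn
  have hnσ : 1 < (n:ℝ) - σ := by linarith
  have hα0 : 0 < α := by rw [hα]; exact div_pos one_pos (by linarith)
  set r : ℕ → ℝ := fun i => (1/8) * ((i:ℝ)+1) ^ (-α) with hrdef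
  set c : ℕ → EuclideanSpace ℝ (Fin n) := fun i => ((i:ℝ)) • e with hcdef
  have hupos : ∀ i : ℕ, (0:ℝ) < ((i:ℝ)+1) ^ (-α) := fun i => by positivity
  have hrpos : ∀ i, 0 < r i := fun i => by
    rw [hrdef]; have := hupos i; simp only []; nlinarith
  have hrle : ∀ i, r i ≤ 1/8 := by
    intro i
    have h1 : ((i:ℝ)+1) ^ (-α) ≤ 1 :=
      Real.rpow_le_one_of_one_le_of_nonpos
        (by push_cast; linarith [Nat.cast_nonneg (α := ℝ) i]) (by linarith)
    rw [hrdef]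
    simp only []
    nlinarith
  have hcd : ∀ i j : ℕ, i ≠ j → (1:ℝ) ≤ dist (c i) (c j) := by
    intro i j hij
    rw [hcdef]
    simp only []
    rw [dist_eq_norm, ← sub_smul, norm_smul, hne, mul_one, Real.norm_eq_abs]
    rcases Nat.lt_or_ge i j with h | h
    · rw [abs_sub_comm, abs_of_nonneg (by simp [Nat.cast_le, h.le] : (0:ℝ) ≤ (j:ℝ) - (i:ℝ))]
      have : (i:ℝ) + 1 ≤ (j:ℝ) := by exact_mod_cast h
      linarith
    · have hij' : j < i := lt_of_le_of_ne h (Ne.symm hij)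
      rw [abs_of_nonneg (by simp [Nat.cast_le, hij'.le] : (0:ℝ) ≤ (i:ℝ) - (j:ℝ))]
      have : (j:ℝ) + 1 ≤ (i:ℝ) := by exact_mod_cast hij'
      linarith
  have hsep : ∀ i j, i ≠ j → ∀ x ∈ ball (c i) (r i), ∀ y ∈ ball (c j) (r j),
      (1:ℝ)/2 ≤ dist x y := by
    intro i j hij x hx y hy
    have h1 := hcd i j hij
    have hx' := mem_ball.1 hx
    have hy' := mem_ball.1 hy
    have htri := dist_triangle4 (c i) x y (c j)
    have hri := hrle i
    have hrj := hrle j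
    rw [dist_comm (c i) x] at htri
    linarith
  refine ⟨c, r, hrpos, hsep, ?_, ?_⟩
  · -- Finiteness for s < σ
    rintro s ⟨hs0, hsσ⟩
    have hs1 : s < 1 := lt_trans hsσ hσ1
    have hq1 : ENNReal.ofReal ((2:ℝ)^(-s)) < 1 := by
      rw [← ENNReal.ofReal_one]
      exact ENNReal.ofReal_lt_ofReal_iff_of_nonneg (by positivity) |>.mpr
        (Real.rpow_lt_one_of_one_lt_of_neg one_lt_two (by linarith))
    have hq2 : ENNReal.ofReal ((2:ℝ)^(s-1)) < 1 := by
      rw [← ENNReal.ofReal_one]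
      exact ENNReal.ofReal_lt_ofReal_iff_of_nonneg (by positivity) |>.mpr
        (Real.rpow_lt_one_of_one_lt_of_neg one_lt_two (by linarith))
    set K : ℝ≥0∞ := (Vb n * ENNReal.ofReal ((2:ℝ)^n) * (1 - ENNReal.ofReal ((2:ℝ)^(-s)))⁻¹) *
      (Vb n * ENNReal.ofReal ((n:ℝ) * 2^s) * (1 - ENNReal.ofReal ((2:ℝ)^(s-1)))⁻¹) with hK
    have hKtop : K < ⊤ := by
      rw [hK]
      refine ENNReal.mul_lt_top
        (ENNReal.mul_lt_top (ENNReal.mul_lt_top measure_ball_lt_top ENNReal.ofReal_lt_top) ?_)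
        (ENNReal.mul_lt_top (ENNReal.mul_lt_top measure_ball_lt_top ENNReal.ofReal_lt_top) ?_)
      · rw [ENNReal.inv_lt_top]; exact tsub_pos_of_lt hq1
      · rw [ENNReal.inv_lt_top]; exact tsub_pos_of_lt hq2
    have step1 : perG n s (⋃ i, ball (c i) (r i)) ≤
        ∑' i, K * ENNReal.ofReal ((r i) ^ ((n:ℝ) - s)) := by
      unfold perG interL
      calc ∫⁻ x in ⋃ i, ball (c i) (r i),
              ∫⁻ y in (⋃ i, ball (c i) (r i))ᶜ, fracKer n s x y
          ≤ ∑' i, ∫⁻ x in ball (c i) (r i),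
              ∫⁻ y in (⋃ j, ball (c j) (r j))ᶜ, fracKer n s x y :=
            lintegral_iUnion_le _ _
        _ ≤ ∑' i, K * ENNReal.ofReal ((r i) ^ ((n:ℝ) - s)) := by
            apply ENNReal.tsum_le_tsum
            intro i
            calc ∫⁻ x in ball (c i) (r i), ∫⁻ y in (⋃ j, ball (c j) (r j))ᶜ, fracKer n s x y
                ≤ ∫⁻ x in ball (c i) (r i), ∫⁻ y in (ball (c i) (r i))ᶜ, fracKer n s x y :=
                  lintegral_mono fun x =>
                    lintegral_mono_set (compl_subset_compl.2 (subset_iUnion (fun j => ball (c j) (r j)) i))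
              _ ≤ K * ENNReal.ofReal ((r i) ^ ((n:ℝ) - s)) :=
                  ball_perG hn1 hs0 hs1 (c i) (hrpos i)
    have hp : 1 < α * ((n:ℝ) - s) := by
      rw [hα, div_mul_eq_mul_div, one_mul, lt_div_iff₀ (by linarith)]
      linarith
    have hprep : ∀ i : ℕ, (r i) ^ ((n:ℝ) - s)
        = (1/8:ℝ) ^ ((n:ℝ) - s) * (((i:ℝ)+1) ^ (-(α * ((n:ℝ) - s)))) := by
      intro i
      rw [hrdef]
      simp only []
      rw [Real.mul_rpow (by norm_num) (hupos i).le]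
      congr 1
      rw [← Real.rpow_mul (by positivity), neg_mul]
    have hsum : Summable (fun i : ℕ => (r i) ^ ((n:ℝ) - s)) := by
      have := (summable_shift_rpow (p := -(α * ((n:ℝ) - s))) (by linarith)).mul_left
        ((1/8:ℝ) ^ ((n:ℝ) - s))
      exact this.congr fun i => (hprep i).symm
    refine lt_of_le_of_lt step1 ?_
    rw [ENNReal.tsum_mul_left, ← ENNReal.ofReal_tsum_of_nonneg (fun i => by positivity) hsum]
    exact ENNReal.mul_lt_top hKtop ENNReal.ofReal_lt_top
  · -- Infiniteness for s ≥ σ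
    rintro s ⟨hσs, hs1⟩
    have hs0 : 0 < s := lt_of_lt_of_le hσ0 hσs
    set q : ℕ → EuclideanSpace ℝ (Fin n) := fun i => c i + (3/2 * r i) • e with hq
    have hqc : ∀ i, dist (q i) (c i) = 3/2 * r i := by
      intro i
      rw [hq]
      simp only []
      rw [dist_eq_norm, add_sub_cancel_left, norm_smul, hne, mul_one, Real.norm_eq_abs,
        abs_of_nonneg (by linarith [hrpos i])]
    have hyci : ∀ i, ∀ y ∈ ball (q i) (r i / 2), r i ≤ dist y (c i) ∧ dist y (c i) < 2 * r i := by
      intro i y hy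
      have hy' := mem_ball.1 hy
      have h1 := hqc i
      have t1 := dist_triangle (q i) y (c i)
      have t2 := dist_triangle y (q i) (c i)
      rw [dist_comm (q i) y] at t1
      constructor <;> linarith
    have hAE : ∀ i, ball (q i) (r i / 2) ⊆ (⋃ j, ball (c j) (r j))ᶜ := by
      intro i y hy
      obtain ⟨hd1, hd2⟩ := hyci i y hy
      intro hyE
      rw [mem_iUnion] at hyE
      obtain ⟨j, hj⟩ := hyE
      have hj' := mem_ball.1 hj
      by_cases hij : j = i
      · subst hij; linarith
      · have h1 := hcd i j (Ne.symm hij)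
        have htri := dist_triangle (c i) y (c j)
        rw [dist_comm (c i) y] at htri
        have hri := hrle i
        have hrj := hrle j
        linarith
    have hkernel : ∀ i, ∀ x ∈ ball (c i) (r i), ∀ y ∈ ball (q i) (r i / 2),
        ENNReal.ofReal ((3 * r i) ^ (-((n:ℝ)+s))) ≤ fracKer n s x y := by
      intro i x hx y hy
      obtain ⟨hd1, hd2⟩ := hyci i y hy
      have hx' := mem_ball.1 hx
      have hxypos : 0 < ‖x - y‖ := by
        rw [← dist_eq_norm]
        have := dist_triangle y x (c i)
        rw [dist_comm x (c i)] at hx'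
        by_contra hcon
        push_neg at hcon
        have : dist y x = 0 := le_antisymm (by rwa [dist_comm y x]) dist_nonneg
        rw [dist_comm] at this
        have hxy : x = y := by rwa [dist_eq_zero] at this
        rw [hxy] at hx'
        rw [dist_comm] at hx'
        linarith
      have hxyle : ‖x - y‖ ≤ 3 * r i := by
        rw [← dist_eq_norm]
        have t := dist_triangle x (c i) y
        rw [dist_comm (c i) y] at t
        linarith
      exact ENNReal.ofReal_le_ofReal
        (Real.rpow_le_rpow_of_nonpos hxypos hxyle (neg_nonpos.mpr (by positivity)))
    have hdisj : Pairwise (Function.onFun Disjoint (fun i => ball (c i) (r i))) := by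
      intro i j hij
      rw [Function.onFun, Set.disjoint_left]
      intro z hz1 hz2
      have h1 := hcd i j hij
      have hz1' := mem_ball.1 hz1
      have hz2' := mem_ball.1 hz2
      have htri := dist_triangle (c i) z (c j)
      rw [dist_comm (c i) z] at htri
      have hri := hrle i
      have hrj := hrle j
      linarith
    have main : perG n s (⋃ i, ball (c i) (r i)) =
        ∑' i, ∫⁻ x in ball (c i) (r i),
          ∫⁻ y in (⋃ j, ball (c j) (r j))ᶜ, fracKer n s x y := by
      unfold perG interL
      exact lintegral_iUnion (fun i => measurableSet_ball) hdisj _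
    have lower : ∀ i, ENNReal.ofReal ((3 * r i) ^ (-((n:ℝ)+s))) *
          (ENNReal.ofReal ((r i / 2)^n) * Vb n) * (ENNReal.ofReal ((r i)^n) * Vb n)
        ≤ ∫⁻ x in ball (c i) (r i), ∫⁻ y in (⋃ j, ball (c j) (r j))ᶜ, fracKer n s x y := by
      intro i
      have inner : ∀ x ∈ ball (c i) (r i),
          ENNReal.ofReal ((3 * r i) ^ (-((n:ℝ)+s))) * (ENNReal.ofReal ((r i / 2)^n) * Vb n)
            ≤ ∫⁻ y in (⋃ j, ball (c j) (r j))ᶜ, fracKer n s x y := by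
        intro x hx
        calc ENNReal.ofReal ((3 * r i) ^ (-((n:ℝ)+s))) * (ENNReal.ofReal ((r i / 2)^n) * Vb n)
            = ENNReal.ofReal ((3 * r i) ^ (-((n:ℝ)+s))) * volume (ball (q i) (r i / 2)) := by
              rw [vol_ball hn1 _ (by linarith [hrpos i] : (0:ℝ) ≤ r i / 2)]
          _ = ∫⁻ _ in ball (q i) (r i / 2), ENNReal.ofReal ((3 * r i) ^ (-((n:ℝ)+s))) :=
              (setLIntegral_const _ _).symm
          _ ≤ ∫⁻ y in ball (q i) (r i / 2), fracKer n s x y :=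
              setLIntegral_mono' measurableSet_ball (fun y hy => hkernel i x hx y hy)
          _ ≤ ∫⁻ y in (⋃ j, ball (c j) (r j))ᶜ, fracKer n s x y :=
              lintegral_mono_set (hAE i)
      calc ENNReal.ofReal ((3 * r i) ^ (-((n:ℝ)+s))) *
              (ENNReal.ofReal ((r i / 2)^n) * Vb n) * (ENNReal.ofReal ((r i)^n) * Vb n)
          = ENNReal.ofReal ((3 * r i) ^ (-((n:ℝ)+s))) *
              (ENNReal.ofReal ((r i / 2)^n) * Vb n) * volume (ball (c i) (r i)) := by
            rw [vol_ball hn1 _ (hrpos i).le]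
        _ = ∫⁻ _ in ball (c i) (r i), ENNReal.ofReal ((3 * r i) ^ (-((n:ℝ)+s))) *
              (ENNReal.ofReal ((r i / 2)^n) * Vb n) := (setLIntegral_const _ _).symm
        _ ≤ ∫⁻ x in ball (c i) (r i), ∫⁻ y in (⋃ j, ball (c j) (r j))ᶜ, fracKer n s x y :=
            setLIntegral_mono' measurableSet_ball inner
    -- the lower bounds sum to infinity
    set g : ℕ → ℝ := fun i => (3 * r i) ^ (-((n:ℝ)+s)) * ((r i / 2)^n * (r i)^n) with hg
    have hgpos : ∀ i, 0 < g i := fun i => by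
      have := hrpos i
      rw [hg]
      have h1 : (0:ℝ) < (3 * r i) ^ (-((n:ℝ)+s)) := Real.rpow_pos_of_pos (by linarith) _
      positivity
    have hcomb : ∀ i, ENNReal.ofReal ((3 * r i) ^ (-((n:ℝ)+s))) *
          (ENNReal.ofReal ((r i / 2)^n) * Vb n) * (ENNReal.ofReal ((r i)^n) * Vb n)
        = ENNReal.ofReal (g i) * (Vb n * Vb n) := by
      intro i
      rw [hg]
      simp only []
      rw [ENNReal.ofReal_mul (by positivity), ENNReal.ofReal_mul (by positivity)]
      ring
    have hgns : ¬ Summable g := by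
      intro hsg
      -- closed form for g
      have hgform : ∀ i : ℕ, g i
          = ((3/8:ℝ) ^ (-((n:ℝ)+s)) * ((1/16:ℝ)^n * (1/8:ℝ)^n)) *
            (((i:ℝ)+1) ^ (-(α * ((n:ℝ) - s)))) := by
        intro i
        have hui := hupos i
        set u : ℝ := ((i:ℝ)+1) ^ (-α) with hu
        have hr8 : r i = (1/8) * u := by rw [hrdef]
        have h3r : 3 * r i = (3/8) * u := by rw [hr8]; ring
        have hr2 : r i / 2 = (1/16) * u := by rw [hr8]; ring
        rw [hg]
        simp only []
        rw [h3r, hr2, hr8, Real.mul_rpow (by norm_num) hui.le, mul_pow, mul_pow]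
        have upow : u ^ (-((n:ℝ)+s)) * (u^n * u^n) = u ^ ((n:ℝ) - s) := by
          rw [← Real.rpow_natCast u n, ← Real.rpow_add hui, ← Real.rpow_add hui]
          congr 1
          ring
        have ufin : u ^ ((n:ℝ) - s) = ((i:ℝ)+1) ^ (-(α * ((n:ℝ) - s))) := by
          rw [hu, ← Real.rpow_mul (by positivity), neg_mul]
        calc (3/8:ℝ)^(-((n:ℝ)+s)) * u ^ (-((n:ℝ)+s)) * ((1/16:ℝ)^n * u^n * ((1/8:ℝ)^n * u^n))
            = ((3/8:ℝ)^(-((n:ℝ)+s)) * ((1/16:ℝ)^n * (1/8:ℝ)^n)) *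
              (u ^ (-((n:ℝ)+s)) * (u^n * u^n)) := by ring
          _ = _ := by rw [upow, ufin]
      have hC0 : (0:ℝ) < (3/8:ℝ) ^ (-((n:ℝ)+s)) * ((1/16:ℝ)^n * (1/8:ℝ)^n) := by
        have : (0:ℝ) < (3/8:ℝ) ^ (-((n:ℝ)+s)) := Real.rpow_pos_of_pos (by norm_num) _
        positivity
      have hsummable2 : Summable (fun i : ℕ => ((i:ℝ)+1) ^ (-(α * ((n:ℝ) - s)))) := by
        have := hsg.mul_left ((3/8:ℝ) ^ (-((n:ℝ)+s)) * ((1/16:ℝ)^n * (1/8:ℝ)^n))⁻¹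
        apply this.congr
        intro i
        rw [hgform i, ← mul_assoc, inv_mul_cancel₀ hC0.ne', one_mul]
      have hple : α * ((n:ℝ) - s) ≤ 1 := by
        rw [hα, div_mul_eq_mul_div, one_mul, div_le_one (by linarith)]
        linarith
      exact not_summable_shift_rpow (by linarith) hsummable2
    have hVne : Vb n * Vb n ≠ 0 :=
      mul_ne_zero (measure_ball_pos _ _ one_pos).ne' (measure_ball_pos _ _ one_pos).ne'
    have htsum_top : (∑' i, ENNReal.ofReal (g i)) = ⊤ := by
      by_contra hcon
      have hsumg := ENNReal.summable_toReal hcon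
      apply hgns
      apply hsumg.congr
      intro i
      simp [ENNReal.toReal_ofReal (hgpos i).le]
    rw [main, ← top_le_iff]
    calc (⊤:ℝ≥0∞) = (∑' i, ENNReal.ofReal (g i)) * (Vb n * Vb n) := by
          rw [htsum_top, ENNReal.top_mul hVne]
      _ = ∑' i, ENNReal.ofReal (g i) * (Vb n * Vb n) := (ENNReal.tsum_mul_right).symm
      _ = ∑' i, ENNReal.ofReal ((3 * r i) ^ (-((n:ℝ)+s))) *
            (ENNReal.ofReal ((r i / 2)^n) * Vb n) * (ENNReal.ofReal ((r i)^n) * Vb n) := by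
          exact tsum_congr fun i => (hcomb i).symm
      _ ≤ _ := ENNReal.tsum_le_tsum lower
end

section
/- Let 0 < a < 1 and let E := ⋃_{k ∈ ℕ} (a^{2k+1}, a^{2k}) ⊆ ℝ. Then for every s ∈ (0,1), P_s(E) = ∫_E ∫_{Eᶜ} |x−y|^{−(1+s)} dy dx < ∞. -/
open MeasureTheory Metric Set Filter
open scoped ENNReal Topology

/-- The global `s`-fractional perimeter of a set `E ⊆ ℝ`:
`P_s(E) = ∫_E ∫_{Eᶜ} |x-y|^{-(1+s)} dy dx`. -/
noncomputable def perR (s : ℝ) (E : Set ℝ) : ℝ≥0∞ :=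
  ∫⁻ x in E, ∫⁻ y in Eᶜ, ENNReal.ofReal (|x - y| ^ (-(1 + s)))

-- Tail integral: ∫⁻ t in Ici d, ofReal (t ^ (-(1+s))) = ofReal (d^(-s)/s)
lemma tail_Ici (s : ℝ) (hs : 0 < s) {d : ℝ} (hd : 0 < d) :
    ∫⁻ t in Set.Ici d, ENNReal.ofReal (t ^ (-(1 + s))) = ENNReal.ofReal (d ^ (-s) / s) := by
  rw [← MeasureTheory.Measure.restrict_congr_set Ioi_ae_eq_Ici]
  have hint : IntegrableOn (fun t : ℝ => t ^ (-(1 + s))) (Set.Ioi d) :=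
    integrableOn_Ioi_rpow_of_lt (by linarith) hd
  rw [← MeasureTheory.ofReal_integral_eq_lintegral_ofReal hint ?_]
  · rw [integral_Ioi_rpow_of_lt (by linarith) hd]
    congr 1
    rw [show -(1 + s) + 1 = -s by ring]
    field_simp
  · filter_upwards [ae_restrict_mem measurableSet_Ioi] with t ht
    exact Real.rpow_nonneg (le_of_lt (hd.trans ht)) _

lemma tail_bound_s13 (s : ℝ) (hs : 0 < s) (x : ℝ) {d : ℝ} (hd : 0 < d) :
    ∫⁻ y in {y : ℝ | d ≤ |x - y|}, ENNReal.ofReal (|x - y| ^ (-(1 + s)))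
      ≤ 2 * ENNReal.ofReal (d ^ (-s) / s) := by
  have hset : {y : ℝ | d ≤ |x - y|} = Set.Iic (x - d) ∪ Set.Ici (x + d) := by
    ext y
    simp only [Set.mem_setOf_eq, Set.mem_union, Set.mem_Iic, Set.mem_Ici, le_abs]
    constructor
    · rintro (h | h)
      · left; linarith
      · right; linarith
    · rintro (h | h)
      · left; linarith
      · right; linarith
  rw [hset]
  have h1 : ∫⁻ y in Set.Iic (x - d), ENNReal.ofReal (|x - y| ^ (-(1 + s)))
      = ENNReal.ofReal (d ^ (-s) / s) := by
    have hcong : ∫⁻ y in Set.Iic (x - d), ENNReal.ofReal (|x - y| ^ (-(1 + s)))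
        = ∫⁻ y in Set.Iic (x - d), ENNReal.ofReal ((x - y) ^ (-(1 + s))) := by
      refine setLIntegral_congr_fun measurableSet_Iic (fun y hy => ?_)
      rw [abs_of_nonneg (by simp only [Set.mem_Iic] at hy; linarith)]
    rw [hcong]
    have hmp := Measure.measurePreserving_sub_left (volume : Measure ℝ) x
    have hemb := (MeasurableEquiv.subLeft x).measurableEmbedding
    have hpre : (fun t : ℝ => x - t) ⁻¹' Set.Iic (x - d) = Set.Ici d := by
      ext t; simp only [Set.mem_preimage, Set.mem_Iic, Set.mem_Ici]; constructor <;> intro h <;> linarith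
    have := hmp.setLIntegral_comp_preimage_emb hemb
      (fun y => ENNReal.ofReal ((x - y) ^ (-(1 + s)))) (Set.Iic (x - d))
    rw [← this, hpre] at *
    · rw [show (fun t : ℝ => ENNReal.ofReal ((x - (x - t)) ^ (-(1 + s))))
          = fun t : ℝ => ENNReal.ofReal (t ^ (-(1 + s))) by funext t; ring_nf]
      exact tail_Ici s hs hd
  have h2 : ∫⁻ y in Set.Ici (x + d), ENNReal.ofReal (|x - y| ^ (-(1 + s)))
      = ENNReal.ofReal (d ^ (-s) / s) := by
    have hcong : ∫⁻ y in Set.Ici (x + d), ENNReal.ofReal (|x - y| ^ (-(1 + s)))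
        = ∫⁻ y in Set.Ici (x + d), ENNReal.ofReal ((y - x) ^ (-(1 + s))) := by
      refine setLIntegral_congr_fun measurableSet_Ici (fun y hy => ?_)
      rw [abs_sub_comm, abs_of_nonneg (by simp only [Set.mem_Ici] at hy; linarith)]
    rw [hcong]
    have hmp := measurePreserving_add_right (volume : Measure ℝ) x
    have hemb := (MeasurableEquiv.addRight x).measurableEmbedding
    have hpre : (fun t : ℝ => t + x) ⁻¹' Set.Ici (x + d) = Set.Ici d := by
      ext t; simp only [Set.mem_preimage, Set.mem_Ici]; constructor <;> intro h <;> linarith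
    have := hmp.setLIntegral_comp_preimage_emb hemb
      (fun y => ENNReal.ofReal ((y - x) ^ (-(1 + s)))) (Set.Ici (x + d))
    rw [← this, hpre]
    rw [show (fun t : ℝ => ENNReal.ofReal ((t + x - x) ^ (-(1 + s))))
        = fun t : ℝ => ENNReal.ofReal (t ^ (-(1 + s))) by funext t; ring_nf]
    exact tail_Ici s hs hd
  calc ∫⁻ y in Set.Iic (x - d) ∪ Set.Ici (x + d), ENNReal.ofReal (|x - y| ^ (-(1 + s)))
      ≤ (∫⁻ y in Set.Iic (x - d), ENNReal.ofReal (|x - y| ^ (-(1 + s))))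
        + ∫⁻ y in Set.Ici (x + d), ENNReal.ofReal (|x - y| ^ (-(1 + s))) :=
        lintegral_union_le _ _ _
    _ = 2 * ENNReal.ofReal (d ^ (-s) / s) := by rw [h1, h2, two_mul]

lemma interval_left (s : ℝ) (hs0 : 0 < s) (hs1 : s < 1) {l r : ℝ} (hlr : l < r) :
    ∫⁻ x in Set.Ioo l r, ENNReal.ofReal ((x - l) ^ (-s))
      = ENNReal.ofReal ((r - l) ^ (1 - s) / (1 - s)) := by
  have hii : IntervalIntegrable (fun x : ℝ => x ^ (-s)) volume 0 (r - l) :=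
    intervalIntegral.intervalIntegrable_rpow' (by linarith)
  have hii' : IntervalIntegrable (fun x : ℝ => (x - l) ^ (-s)) volume l r := by
    simpa using hii.comp_sub_right l
  have hint : IntegrableOn (fun x : ℝ => (x - l) ^ (-s)) (Set.Ioo l r) :=
    ((intervalIntegrable_iff_integrableOn_Ioc_of_le hlr.le).mp hii').mono_set Set.Ioo_subset_Ioc_self
  rw [← MeasureTheory.ofReal_integral_eq_lintegral_ofReal hint ?_]
  · congr 1
    have : ∫ x in Set.Ioo l r, (x - l) ^ (-s) = ∫ x in l..r, (x - l) ^ (-s) := by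
      rw [intervalIntegral.integral_of_le hlr.le, MeasureTheory.integral_Ioc_eq_integral_Ioo]
    rw [this, intervalIntegral.integral_comp_sub_right (fun x => x ^ (-s)) l, sub_self,
      integral_rpow (Or.inl (by linarith))]
    rw [Real.zero_rpow (by linarith), show -s + 1 = 1 - s by ring]
    simp
  · filter_upwards [ae_restrict_mem measurableSet_Ioo] with t ht
    exact Real.rpow_nonneg (by simp only [Set.mem_Ioo] at ht; linarith) _

lemma interval_right (s : ℝ) (hs0 : 0 < s) (hs1 : s < 1) {l r : ℝ} (hlr : l < r) :
    ∫⁻ x in Set.Ioo l r, ENNReal.ofReal ((r - x) ^ (-s))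
      = ENNReal.ofReal ((r - l) ^ (1 - s) / (1 - s)) := by
  have hii : IntervalIntegrable (fun x : ℝ => x ^ (-s)) volume 0 (r - l) :=
    intervalIntegral.intervalIntegrable_rpow' (by linarith)
  have hii' : IntervalIntegrable (fun x : ℝ => (r - x) ^ (-s)) volume l r := by
    simpa using (hii.comp_sub_left r).symm
  have hint : IntegrableOn (fun x : ℝ => (r - x) ^ (-s)) (Set.Ioo l r) :=
    ((intervalIntegrable_iff_integrableOn_Ioc_of_le hlr.le).mp hii').mono_set Set.Ioo_subset_Ioc_self
  rw [← MeasureTheory.ofReal_integral_eq_lintegral_ofReal hint ?_]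
  · congr 1
    have : ∫ x in Set.Ioo l r, (r - x) ^ (-s) = ∫ x in l..r, (r - x) ^ (-s) := by
      rw [intervalIntegral.integral_of_le hlr.le, MeasureTheory.integral_Ioc_eq_integral_Ioo]
    rw [this, intervalIntegral.integral_comp_sub_left (fun x => x ^ (-s)) r, sub_self,
      integral_rpow (Or.inl (by linarith))]
    rw [Real.zero_rpow (by linarith), show -s + 1 = 1 - s by ring]
    simp
  · filter_upwards [ae_restrict_mem measurableSet_Ioo] with t ht
    exact Real.rpow_nonneg (by simp only [Set.mem_Ioo] at ht; linarith) _

lemma interval_bound (s : ℝ) (hs0 : 0 < s) (hs1 : s < 1) (E : Set ℝ) {l r : ℝ} (hlr : l < r)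
    (hsub : Set.Ioo l r ⊆ E) :
    ∫⁻ x in Set.Ioo l r, ∫⁻ y in Eᶜ, ENNReal.ofReal (|x - y| ^ (-(1 + s)))
      ≤ ENNReal.ofReal (4 / (s * (1 - s))) * ENNReal.ofReal ((r - l) ^ (1 - s)) := by
  have hf : Measurable fun x : ℝ => ENNReal.ofReal ((x - l) ^ (-s)) := by fun_prop
  have hg : Measurable fun x : ℝ => ENNReal.ofReal ((r - x) ^ (-s)) := by fun_prop
  set c : ℝ≥0∞ := 2 * ENNReal.ofReal (1 / s) with hc
  have hcne : c ≠ ⊤ := by rw [hc]; exact ENNReal.mul_ne_top (by simp) ENNReal.ofReal_ne_top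
  have hpt : ∀ x ∈ Set.Ioo l r,
      (∫⁻ y in Eᶜ, ENNReal.ofReal (|x - y| ^ (-(1 + s))))
        ≤ c * (ENNReal.ofReal ((x - l) ^ (-s)) + ENNReal.ofReal ((r - x) ^ (-s))) := by
    intro x hx
    obtain ⟨hx1, hx2⟩ := hx
    set d : ℝ := min (x - l) (r - x) with hd
    have hd0 : 0 < d := lt_min (by linarith) (by linarith)
    have hEc : Eᶜ ⊆ {y : ℝ | d ≤ |x - y|} := by
      intro y hy
      simp only [Set.mem_setOf_eq]
      by_contra h
      push_neg at h
      rw [abs_lt] at h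
      apply hy
      apply hsub
      constructor
      · have : d ≤ x - l := min_le_left _ _
        linarith [h.2]
      · have : d ≤ r - x := min_le_right _ _
        linarith [h.1]
    calc (∫⁻ y in Eᶜ, ENNReal.ofReal (|x - y| ^ (-(1 + s))))
        ≤ ∫⁻ y in {y : ℝ | d ≤ |x - y|}, ENNReal.ofReal (|x - y| ^ (-(1 + s))) :=
          lintegral_mono_set hEc
      _ ≤ 2 * ENNReal.ofReal (d ^ (-s) / s) := tail_bound_s13 s hs0 x hd0
      _ ≤ c * (ENNReal.ofReal ((x - l) ^ (-s)) + ENNReal.ofReal ((r - x) ^ (-s))) := by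
          rw [hc, mul_assoc]
          gcongr
          rw [div_eq_mul_inv, mul_comm, ← one_div,
            ENNReal.ofReal_mul (by positivity)]
          gcongr
          refine le_trans (ENNReal.ofReal_le_ofReal ?_) (ENNReal.ofReal_add_le)
          rcases min_le_iff.mp (le_refl d) with _ | _
          · rcases min_cases (x - l) (r - x) with ⟨h1, _⟩ | ⟨h1, _⟩
            · rw [hd, h1]
              nlinarith [Real.rpow_nonneg (show (0:ℝ) ≤ r - x by linarith) (-s)]
            · rw [hd, h1]
              nlinarith [Real.rpow_nonneg (show (0:ℝ) ≤ x - l by linarith) (-s)]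
          · rcases min_cases (x - l) (r - x) with ⟨h1, _⟩ | ⟨h1, _⟩
            · rw [hd, h1]
              nlinarith [Real.rpow_nonneg (show (0:ℝ) ≤ r - x by linarith) (-s)]
            · rw [hd, h1]
              nlinarith [Real.rpow_nonneg (show (0:ℝ) ≤ x - l by linarith) (-s)]
  calc ∫⁻ x in Set.Ioo l r, ∫⁻ y in Eᶜ, ENNReal.ofReal (|x - y| ^ (-(1 + s)))
      ≤ ∫⁻ x in Set.Ioo l r,
          c * (ENNReal.ofReal ((x - l) ^ (-s)) + ENNReal.ofReal ((r - x) ^ (-s))) :=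
        setLIntegral_mono (by fun_prop) hpt
    _ = c * ((∫⁻ x in Set.Ioo l r, ENNReal.ofReal ((x - l) ^ (-s)))
          + ∫⁻ x in Set.Ioo l r, ENNReal.ofReal ((r - x) ^ (-s))) := by
        rw [lintegral_const_mul' _ _ hcne, lintegral_add_left hf]
    _ = c * (2 * ENNReal.ofReal ((r - l) ^ (1 - s) / (1 - s))) := by
        rw [interval_left s hs0 hs1 hlr, interval_right s hs0 hs1 hlr, two_mul]
    _ ≤ ENNReal.ofReal (4 / (s * (1 - s))) * ENNReal.ofReal ((r - l) ^ (1 - s)) := by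
        rw [← ENNReal.ofReal_mul (div_nonneg (by norm_num) (by nlinarith) : (0:ℝ) ≤ 4 / (s * (1 - s)))]
        have he : c * (2 * ENNReal.ofReal ((r - l) ^ (1 - s) / (1 - s)))
            = ENNReal.ofReal 2 * ENNReal.ofReal 2 * ENNReal.ofReal (1 / s)
              * ENNReal.ofReal ((r - l) ^ (1 - s) / (1 - s)) := by
          rw [hc, show ((2:ℝ≥0∞)) = ENNReal.ofReal 2 by simp]
          ring
        have h1s : (0:ℝ) < 1 - s := by linarith
        rw [he, ← ENNReal.ofReal_mul (by norm_num), ← ENNReal.ofReal_mul (by positivity),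
          ← ENNReal.ofReal_mul (by positivity)]
        apply ENNReal.ofReal_le_ofReal
        apply le_of_eq
        field_simp
        ring

/-- For `0 < a < 1` and `E = ⋃_k (a^{2k+1}, a^{2k})`, the set `E` has
finite global `s`-perimeter for every `s ∈ (0,1)`. -/
theorem perR_union_Ioo_lt_top (a : ℝ) (ha : a ∈ Set.Ioo (0 : ℝ) 1) (s : ℝ)
    (hs : s ∈ Set.Ioo (0 : ℝ) 1) :
    perR s (⋃ k : ℕ, Set.Ioo (a ^ (2 * k + 1)) (a ^ (2 * k))) < ⊤ := by
  obtain ⟨ha0, ha1⟩ := ha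
  obtain ⟨hs0, hs1⟩ := hs
  set E : Set ℝ := ⋃ k : ℕ, Set.Ioo (a ^ (2 * k + 1)) (a ^ (2 * k)) with hE
  set C : ℝ≥0∞ := ENNReal.ofReal (4 / (s * (1 - s))) with hC
  set q : ℝ := (a ^ 2) ^ (1 - s) with hq
  have hq0 : 0 ≤ q := Real.rpow_nonneg (by positivity) _
  have hq1 : q < 1 := Real.rpow_lt_one (by positivity) (by nlinarith) (by linarith)
  have hlr : ∀ k : ℕ, a ^ (2 * k + 1) < a ^ (2 * k) := fun k =>
    pow_lt_pow_right_of_lt_one₀ ha0 ha1 (lt_add_one _)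
  have hbound : ∀ k : ℕ,
      (∫⁻ x in Set.Ioo (a ^ (2 * k + 1)) (a ^ (2 * k)),
        ∫⁻ y in Eᶜ, ENNReal.ofReal (|x - y| ^ (-(1 + s)))) ≤ C * ENNReal.ofReal (q ^ k) := by
    intro k
    refine le_trans (interval_bound s hs0 hs1 E (hlr k)
      (Set.subset_iUnion (fun k : ℕ => Set.Ioo (a ^ (2 * k + 1)) (a ^ (2 * k))) k)) ?_
    rw [hC]
    gcongr
    have h1 : a ^ (2 * k) - a ^ (2 * k + 1) ≤ (a ^ 2) ^ k := by
      rw [← pow_mul]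
      nlinarith [pow_pos ha0 (2 * k + 1)]
    have h2 : ((a ^ 2) ^ k : ℝ) ^ (1 - s) = q ^ k := by
      rw [hq, ← Real.rpow_natCast ((a ^ 2) ^ (1 - s)) k, ← Real.rpow_natCast (a ^ 2) k,
        ← Real.rpow_mul (by positivity), ← Real.rpow_mul (by positivity), mul_comm]
    calc (a ^ (2 * k) - a ^ (2 * k + 1)) ^ (1 - s)
        ≤ ((a ^ 2) ^ k : ℝ) ^ (1 - s) :=
          Real.rpow_le_rpow (by nlinarith [hlr k]) h1 (by linarith)
      _ = q ^ k := h2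
  have hCne : C ≠ ⊤ := ENNReal.ofReal_ne_top
  calc perR s E ≤ ∑' k : ℕ, ∫⁻ x in Set.Ioo (a ^ (2 * k + 1)) (a ^ (2 * k)),
        ∫⁻ y in Eᶜ, ENNReal.ofReal (|x - y| ^ (-(1 + s))) := by
        rw [perR, hE]
        exact lintegral_iUnion_le _ _
    _ ≤ ∑' k : ℕ, C * ENNReal.ofReal (q ^ k) := ENNReal.tsum_le_tsum hbound
    _ = C * ∑' k : ℕ, (ENNReal.ofReal q) ^ k := by
        rw [ENNReal.tsum_mul_left]
        congr 1
        exact tsum_congr fun k => by rw [ENNReal.ofReal_pow hq0]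
    _ = C * (1 - ENNReal.ofReal q)⁻¹ := by rw [ENNReal.tsum_geometric]
    _ < ⊤ := by
        apply ENNReal.mul_lt_top hCne.lt_top
        rw [ENNReal.inv_lt_top, tsub_pos_iff_lt]
        exact ENNReal.ofReal_lt_one.mpr hq1
end

section
/- Let 0 < a < 1 and let E := ⋃_{k ∈ ℕ} (a^{2k+1}, a^{2k}) ⊆ ℝ. Then (1−s) P_s(E) tends to +∞ as s → 1⁻; in particular E does not have finite perimeter (its characteristic function is not of bounded variation on ℝ). -/
open MeasureTheory Metric Set Filter
open scoped ENNReal Topology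

section Aux

variable {a : ℝ}

/-- Integer powers of `a` are never in `E`. -/
lemma apow_notmem (h0 : 0 < a) (h1 : a < 1) (m : ℤ) :
    (a : ℝ) ^ m ∉ ⋃ k : ℕ, Set.Ioo (a ^ (2 * k + 1)) (a ^ (2 * k)) := by
  rw [Set.mem_iUnion]
  rintro ⟨k, hk1, hk2⟩
  rw [show a ^ (2 * k + 1) = a ^ ((2 * k + 1 : ℕ) : ℤ) from (zpow_natCast a _).symm,
    zpow_lt_zpow_iff_right_of_lt_one₀ h0 h1] at hk1
  rw [show a ^ (2 * k) = a ^ ((2 * k : ℕ) : ℤ) from (zpow_natCast a _).symm,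
    zpow_lt_zpow_iff_right_of_lt_one₀ h0 h1] at hk2
  omega

lemma mid_mem (h0 : 0 < a) (h1 : a < 1) (k : ℕ) :
    (a ^ (2 * k) + a ^ (2 * k + 1)) / 2 ∈ ⋃ j : ℕ, Set.Ioo (a ^ (2 * j + 1)) (a ^ (2 * j)) := by
  have h : a ^ (2 * k + 1) < a ^ (2 * k) :=
    pow_lt_pow_right_of_lt_one₀ h0 h1 (by omega)
  exact Set.mem_iUnion.2 ⟨k, by constructor <;> linarith⟩

/-- The gap `(a^{2k+2}, a^{2k+1})` is contained in the complement of `E`. -/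
lemma gap_subset_compl (h0 : 0 < a) (h1 : a < 1) (k : ℕ) :
    Set.Ioo (a ^ (2 * k + 2)) (a ^ (2 * k + 1)) ⊆
      (⋃ j : ℕ, Set.Ioo (a ^ (2 * j + 1)) (a ^ (2 * j)))ᶜ := by
  intro y hy
  simp only [Set.mem_compl_iff, Set.mem_iUnion, Set.mem_Ioo, not_exists, not_and]
  intro j hj1
  rcases le_or_gt j k with hjk | hjk
  · intro _
    have : a ^ (2 * k + 1) ≤ a ^ (2 * j + 1) :=
      pow_le_pow_of_le_one h0.le h1.le (by omega)
    exact absurd hj1 (not_lt.2 (hy.2.le.trans this))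
  · have : a ^ (2 * j) ≤ a ^ (2 * k + 2) :=
      pow_le_pow_of_le_one h0.le h1.le (by omega)
    linarith [hy.1]

/-- The indicator of `E` is not of bounded variation. -/
lemma not_bv (h0 : 0 < a) (h1 : a < 1) :
    ¬ BoundedVariationOn
        (Set.indicator (⋃ k : ℕ, Set.Ioo (a ^ (2 * k + 1)) (a ^ (2 * k))) fun _ => (1 : ℝ))
        Set.univ := by
  set E := ⋃ k : ℕ, Set.Ioo (a ^ (2 * k + 1)) (a ^ (2 * k)) with hE
  set f : ℝ → ℝ := Set.indicator E fun _ => (1 : ℝ) with hf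
  intro hBV
  obtain ⟨n, hn⟩ := ENNReal.exists_nat_gt (hBV : eVariationOn f Set.univ ≠ ⊤)
  have zlt : ∀ m : ℤ, a ^ (m + 1) < a ^ m := fun m =>
    zpow_lt_zpow_right_of_lt_one₀ h0 h1 (lt_add_one m)
  set c : ℕ → ℝ := fun j => if Even j then a ^ (2 * (n : ℤ) + 1 - j)
      else (a ^ (2 * (n : ℤ) + 1 - j) + a ^ (2 * (n : ℤ) + 2 - j)) / 2 with hc
  have key : ∀ j : ℕ, c j < c (j + 1) := by
    intro j
    rcases Nat.even_or_odd j with hj | hj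
    · have hj1 : ¬ Even (j + 1) := by simp [Nat.even_add_one, hj]
      simp only [hc, if_pos hj, if_neg hj1]
      have e1 : 2 * (n : ℤ) + 1 - ((j + 1 : ℕ) : ℤ) = (2 * (n : ℤ) + 1 - j) - 1 := by
        push_cast; ring
      have e2 : 2 * (n : ℤ) + 2 - ((j + 1 : ℕ) : ℤ) = 2 * (n : ℤ) + 1 - j := by
        push_cast; ring
      rw [e1, e2]
      have h := zlt ((2 * (n : ℤ) + 1 - j) - 1)
      rw [sub_add_cancel] at h
      linarith
    · have hj1 : Even (j + 1) := by simp [Nat.even_add_one, Nat.not_even_iff_odd.2 hj]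
      simp only [hc, if_neg (Nat.not_even_iff_odd.2 hj), if_pos hj1]
      have e1 : 2 * (n : ℤ) + 1 - ((j + 1 : ℕ) : ℤ) = (2 * (n : ℤ) + 1 - j) - 1 := by
        push_cast; ring
      rw [e1]
      have ha1 := zlt ((2 * (n : ℤ) + 1 - j) - 1)
      rw [sub_add_cancel] at ha1
      have ha2 := zlt (2 * (n : ℤ) + 1 - j)
      have e3 : 2 * (n : ℤ) + 2 - (j : ℤ) = (2 * (n : ℤ) + 1 - j) + 1 := by ring
      rw [e3]
      linarith
  have hmono : Monotone c := (strictMono_nat_of_lt_succ key).monotone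
  have hval : ∀ i, i < 2 * n → edist (f (c (i + 1))) (f (c i)) = 1 := by
    intro i hi
    have edist10 : edist (1 : ℝ) 0 = 1 := by
      rw [edist_dist, Real.dist_eq]; norm_num
    have edist01 : edist (0 : ℝ) 1 = 1 := by
      rw [edist_comm]; exact edist10
    have hceven : ∀ j : ℕ, Even j → c j = a ^ (2 * (n : ℤ) + 1 - j) := by
      intro j hj; simp only [hc]; rw [if_pos hj]
    have hcodd : ∀ j : ℕ, ¬ Even j → j ≤ 2 * n + 1 →
        ∃ k : ℕ, c j = (a ^ (2 * k) + a ^ (2 * k + 1)) / 2 := by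
      intro j hj hj2
      obtain ⟨l, hl, hlo⟩ : ∃ l, j = 2 * l + 1 ∧ l ≤ n := by
        rcases Nat.odd_iff.1 (Nat.not_even_iff_odd.1 hj) with h
        exact ⟨j / 2, by omega, by omega⟩
      refine ⟨n - l, ?_⟩
      have e1 : 2 * (n : ℤ) + 1 - (j : ℤ) = ((2 * (n - l) : ℕ) : ℤ) := by omega
      have e2 : 2 * (n : ℤ) + 2 - (j : ℤ) = ((2 * (n - l) + 1 : ℕ) : ℤ) := by omega
      simp only [hc]; rw [if_neg hj, e1, e2, zpow_natCast, zpow_natCast]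
    rcases Nat.even_or_odd i with hie | hio
    · have h0v : f (c i) = 0 := by
        rw [hceven i hie]
        exact Set.indicator_of_notMem (apow_notmem h0 h1 _) _
      obtain ⟨k, hk⟩ := hcodd (i + 1) (by simp [Nat.even_add_one, hie]) (by omega)
      have h1v : f (c (i + 1)) = 1 := by
        rw [hk]
        exact Set.indicator_of_mem (mid_mem h0 h1 k) _
      rw [h0v, h1v, edist10]
    · obtain ⟨k, hk⟩ := hcodd i (Nat.not_even_iff_odd.2 hio) (by omega)
      have h1v : f (c i) = 1 := by
        rw [hk]
        exact Set.indicator_of_mem (mid_mem h0 h1 k) _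
      have h0v : f (c (i + 1)) = 0 := by
        rw [hceven (i + 1) (by simpa [Nat.even_add_one] using Nat.not_even_iff_odd.2 hio)]
        exact Set.indicator_of_notMem (apow_notmem h0 h1 _) _
      rw [h0v, h1v, edist01]
  have hsum := eVariationOn.sum_le (f := f) (n := 2 * n) hmono (fun i => Set.mem_univ (c i))
  have hsum' : (∑ i ∈ Finset.range (2 * n), edist (f (c (i + 1))) (f (c i)))
      = (2 * n : ℕ) := by
    rw [Finset.sum_congr rfl (fun i hi => hval i (Finset.mem_range.1 hi))]
    simp
  rw [hsum'] at hsum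
  have : (n : ℝ≥0∞) ≤ ((2 * n : ℕ) : ℝ≥0∞) := Nat.cast_le.mpr (by omega)
  exact absurd (this.trans hsum) (not_le.2 hn)

/-- Key lower bound for the contribution of the `k`-th interval. -/
lemma key_bound (h0 : 0 < a) (h1 : a < 1) {s : ℝ} (hs0 : 0 < s) (hs1 : s < 1) (k : ℕ) :
    ENNReal.ofReal ((2 : ℝ) ^ (-(1 + s)) * (a ^ (2 * k + 1) * (1 - a)) ^ (1 - s) / (1 - s)) ≤
      ∫⁻ x in Set.Ioo (a ^ (2 * k + 1)) (a ^ (2 * k)),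
        ∫⁻ y in (⋃ j : ℕ, Set.Ioo (a ^ (2 * j + 1)) (a ^ (2 * j)))ᶜ,
          ENNReal.ofReal (|x - y| ^ (-(1 + s))) := by
  set q : ℝ := a ^ (2 * k + 1) with hqdef
  set l : ℝ := q * (1 - a) with hldef
  have hq : 0 < q := pow_pos h0 _
  have hl : 0 < l := mul_pos hq (by linarith)
  have hqa : a ^ (2 * k + 2) = q * a := pow_succ a (2 * k + 1)
  have hqm : q + l ≤ a ^ (2 * k) := by
    have hm : q = a ^ (2 * k) * a := pow_succ a (2 * k)
    have hmpos : (0 : ℝ) < a ^ (2 * k) := pow_pos h0 _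
    nlinarith [sq_nonneg (1 - a)]
  -- the inner pointwise bound
  have step2 : ∀ x ∈ Set.Ioo q (q + l),
      ENNReal.ofReal ((2 : ℝ) ^ (-(1 + s)) * (x - q) ^ (-s)) ≤
        ∫⁻ y in (⋃ j : ℕ, Set.Ioo (a ^ (2 * j + 1)) (a ^ (2 * j)))ᶜ,
          ENNReal.ofReal (|x - y| ^ (-(1 + s))) := by
    intro x hx
    have hxq : 0 < x - q := by linarith [hx.1]
    have hsub2 : Set.Ioo (2 * q - x) q ⊆
        (⋃ j : ℕ, Set.Ioo (a ^ (2 * j + 1)) (a ^ (2 * j)))ᶜ := by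
      refine Set.Subset.trans ?_ (gap_subset_compl h0 h1 k)
      apply Set.Ioo_subset_Ioo _ le_rfl
      rw [hqa]
      have := hx.2
      simp only [hldef] at this
      nlinarith
    have hid : (2 * (x - q)) ^ (-(1 + s)) * (x - q) =
        (2 : ℝ) ^ (-(1 + s)) * (x - q) ^ (-s) := by
      rw [Real.mul_rpow (by norm_num) hxq.le]
      rw [show ((2:ℝ) ^ (-(1+s)) * (x - q) ^ (-(1+s))) * (x - q)
          = (2:ℝ) ^ (-(1+s)) * ((x - q) ^ (-(1+s)) * (x - q) ^ (1:ℝ)) by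
        rw [Real.rpow_one]; ring]
      rw [← Real.rpow_add hxq]
      norm_num
    calc ENNReal.ofReal ((2 : ℝ) ^ (-(1 + s)) * (x - q) ^ (-s))
        = ENNReal.ofReal ((2 * (x - q)) ^ (-(1 + s))) * volume (Set.Ioo (2 * q - x) q) := by
          rw [Real.volume_Ioo, show q - (2 * q - x) = x - q by ring,
            ← ENNReal.ofReal_mul (Real.rpow_nonneg (by linarith) _), hid]
      _ = ∫⁻ _ in Set.Ioo (2 * q - x) q,
            ENNReal.ofReal ((2 * (x - q)) ^ (-(1 + s))) := (setLIntegral_const _ _).symm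
      _ ≤ ∫⁻ y in Set.Ioo (2 * q - x) q, ENNReal.ofReal (|x - y| ^ (-(1 + s))) := by
          refine setLIntegral_mono' measurableSet_Ioo fun y hy => ?_
          apply ENNReal.ofReal_le_ofReal
          have h1y : 0 < x - y := by have := hy.2; linarith [hx.1]
          have h2y : |x - y| ≤ 2 * (x - q) := by
            rw [abs_of_pos h1y]; linarith [hy.1]
          have h3y : 0 < |x - y| := abs_pos.2 (by linarith)
          exact Real.rpow_le_rpow_of_nonpos h3y h2y (by linarith)
      _ ≤ ∫⁻ y in (⋃ j : ℕ, Set.Ioo (a ^ (2 * j + 1)) (a ^ (2 * j)))ᶜ,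
            ENNReal.ofReal (|x - y| ^ (-(1 + s))) :=
          lintegral_mono' (Measure.restrict_mono hsub2 le_rfl) le_rfl
  -- integrability of the comparison function
  have hInt0 : IntervalIntegrable (fun u : ℝ => u ^ (-s)) volume 0 l :=
    intervalIntegral.intervalIntegrable_rpow' (by linarith)
  have hInt1 : IntegrableOn (fun x : ℝ => (x - q) ^ (-s)) (Set.Ioo q (q + l)) volume := by
    have h2 := intervalIntegrable_iff.mp (hInt0.comp_sub_right q)
    refine h2.mono_set ?_
    rw [Set.uIoc_of_le (by linarith : (0:ℝ) + q ≤ l + q)]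
    intro y hy
    exact ⟨by linarith [hy.1], by linarith [hy.2]⟩
  have hInt : IntegrableOn (fun x : ℝ => (2:ℝ) ^ (-(1+s)) * (x - q) ^ (-s))
      (Set.Ioo q (q+l)) volume := hInt1.const_mul _
  have hnn : 0 ≤ᵐ[volume.restrict (Set.Ioo q (q+l))]
      fun x : ℝ => (2:ℝ) ^ (-(1+s)) * (x - q) ^ (-s) := by
    refine (ae_restrict_iff' measurableSet_Ioo).2 (ae_of_all _ fun x hx => ?_)
    exact mul_nonneg (Real.rpow_nonneg (by norm_num) _)
      (Real.rpow_nonneg (by linarith [hx.1]) _)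
  have hint : (∫ x in Set.Ioo q (q+l), (2:ℝ) ^ (-(1+s)) * (x - q) ^ (-s)) =
      (2:ℝ) ^ (-(1+s)) * l ^ (1-s) / (1-s) := by
    rw [← integral_Ioc_eq_integral_Ioo,
      ← intervalIntegral.integral_of_le (by linarith : q ≤ q + l),
      intervalIntegral.integral_const_mul,
      intervalIntegral.integral_comp_sub_right (fun u : ℝ => u ^ (-s)) q,
      show q - q = (0:ℝ) by ring, show q + l - q = l by ring,
      integral_rpow (Or.inl (by linarith : (-1:ℝ) < -s)),
      Real.zero_rpow (by intro h; linarith : -s + 1 ≠ 0),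
      show -s + 1 = 1 - s by ring]
    ring
  calc ENNReal.ofReal ((2 : ℝ) ^ (-(1 + s)) * l ^ (1 - s) / (1 - s))
      = ENNReal.ofReal (∫ x in Set.Ioo q (q+l), (2:ℝ) ^ (-(1+s)) * (x - q) ^ (-s)) := by
        rw [hint]
    _ = ∫⁻ x in Set.Ioo q (q+l), ENNReal.ofReal ((2:ℝ) ^ (-(1+s)) * (x - q) ^ (-s)) :=
        ofReal_integral_eq_lintegral_ofReal hInt hnn
    _ ≤ ∫⁻ x in Set.Ioo q (q+l),
          ∫⁻ y in (⋃ j : ℕ, Set.Ioo (a ^ (2 * j + 1)) (a ^ (2 * j)))ᶜ,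
            ENNReal.ofReal (|x - y| ^ (-(1 + s))) :=
        setLIntegral_mono' measurableSet_Ioo step2
    _ ≤ ∫⁻ x in Set.Ioo q (a ^ (2 * k)),
          ∫⁻ y in (⋃ j : ℕ, Set.Ioo (a ^ (2 * j + 1)) (a ^ (2 * j)))ᶜ,
            ENNReal.ofReal (|x - y| ^ (-(1 + s))) :=
        lintegral_mono' (Measure.restrict_mono (Set.Ioo_subset_Ioo le_rfl hqm) le_rfl) le_rfl

set_option maxHeartbeats 1000000 in
/-- For `0 < a < 1` and `E = ⋃_k (a^{2k+1}, a^{2k})`, the quantity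
`(1-s) P_s(E)` tends to `+∞` as `s → 1⁻`; in particular the characteristic function
of `E` is not of bounded variation on `ℝ`. -/
theorem perR_union_Ioo_blowup (a : ℝ) (ha : a ∈ Set.Ioo (0 : ℝ) 1) :
    (∀ M : ℝ, 0 < M → ∃ s₀ ∈ Set.Ioo (0 : ℝ) 1, ∀ s : ℝ, s₀ < s → s < 1 →
      ENNReal.ofReal M <
        ENNReal.ofReal (1 - s) * perR s (⋃ k : ℕ, Set.Ioo (a ^ (2 * k + 1)) (a ^ (2 * k)))) ∧
    ¬ BoundedVariationOn
        (Set.indicator (⋃ k : ℕ, Set.Ioo (a ^ (2 * k + 1)) (a ^ (2 * k))) fun _ => (1 : ℝ))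
        Set.univ := by
  obtain ⟨ha0, ha1⟩ := ha
  refine ⟨?_, not_bv ha0 ha1⟩
  intro M hM
  obtain ⟨N, hN⟩ := exists_nat_gt (8 * M)
  set cc : ℝ := a ^ (2 * N + 1) * (1 - a) with hccdef
  have hcc0 : 0 < cc := mul_pos (pow_pos ha0 _) (by linarith)
  have hcc1 : cc < 1 := by
    have := pow_le_one₀ ha0.le ha1.le (n := 2 * N + 1)
    nlinarith
  have hlogc : Real.log cc < 0 := Real.log_neg hcc0 hcc1
  refine ⟨max (1/2) (1 - Real.log 2 / (-Real.log cc)),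
    ⟨lt_of_lt_of_le (by norm_num) (le_max_left _ _),
      max_lt (by norm_num)
        (by have := div_pos (Real.log_pos one_lt_two) (by linarith : (0:ℝ) < -Real.log cc)
            linarith)⟩, ?_⟩
  intro s hs hs1
  have hs0 : 0 < s := lt_of_lt_of_le (by norm_num) ((le_max_left _ _).trans hs.le)
  have hsl : 1 - s < Real.log 2 / (-Real.log cc) := by
    have := (le_max_right (1/2) (1 - Real.log 2 / (-Real.log cc))).trans_lt hs
    linarith
  have hcs : (1:ℝ)/2 < cc ^ (1 - s) := by
    rw [Real.rpow_def_of_pos hcc0,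
      show (1:ℝ)/2 = Real.exp (Real.log (1/2)) from (Real.exp_log (by norm_num)).symm,
      Real.exp_lt_exp, show Real.log ((1:ℝ)/2) = -Real.log 2 by
        rw [one_div, Real.log_inv]]
    have hpos : 0 < -Real.log cc := by linarith
    have h2 := (lt_div_iff₀ hpos).1 hsl
    nlinarith
  have hBk : ∀ k, k < N →
      (1:ℝ)/8 ≤ (2:ℝ) ^ (-(1+s)) * (a ^ (2 * k + 1) * (1 - a)) ^ (1 - s) := by
    intro k hk
    have h2b : (1:ℝ)/4 ≤ (2:ℝ) ^ (-(1+s)) := by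
      have hle : (2:ℝ) ^ ((-2 : ℤ) : ℝ) ≤ 2 ^ (-(1+s)) :=
        Real.rpow_le_rpow_of_exponent_le one_le_two (by push_cast; linarith)
      have h4 : (2:ℝ) ^ ((-2 : ℤ) : ℝ) = 1/4 := by
        rw [Real.rpow_intCast]; norm_num
      rw [h4] at hle
      exact hle
    have hck : cc ≤ a ^ (2 * k + 1) * (1 - a) :=
      mul_le_mul_of_nonneg_right
        (pow_le_pow_of_le_one ha0.le ha1.le (by omega)) (by linarith)
    have h3 : cc ^ (1 - s) ≤ (a ^ (2 * k + 1) * (1 - a)) ^ (1 - s) :=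
      Real.rpow_le_rpow hcc0.le hck (by linarith)
    nlinarith [Real.rpow_nonneg hcc0.le (1 - s)]
  -- disjointness
  have gen : ∀ i j : ℕ, i < j →
      Disjoint (Set.Ioo (a ^ (2 * i + 1)) (a ^ (2 * i)))
        (Set.Ioo (a ^ (2 * j + 1)) (a ^ (2 * j))) := by
    intro i j hij
    rw [Set.Ioo_disjoint_Ioo]
    calc min (a ^ (2 * i)) (a ^ (2 * j)) ≤ a ^ (2 * j) := min_le_right _ _
      _ ≤ a ^ (2 * i + 1) := pow_le_pow_of_le_one ha0.le ha1.le (by omega)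
      _ ≤ max (a ^ (2 * i + 1)) (a ^ (2 * j + 1)) := le_max_left _ _
  have hdisj : (↑(Finset.range N) : Set ℕ).PairwiseDisjoint
      (fun k : ℕ => Set.Ioo (a ^ (2 * k + 1)) (a ^ (2 * k))) := by
    intro i _ j _ hij
    rcases hij.lt_or_gt with h | h
    · exact gen i j h
    · exact (gen j i h).symm
  have hsum : (∑ k ∈ Finset.range N,
      ∫⁻ x in Set.Ioo (a ^ (2 * k + 1)) (a ^ (2 * k)),
        ∫⁻ y in (⋃ j : ℕ, Set.Ioo (a ^ (2 * j + 1)) (a ^ (2 * j)))ᶜ,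
          ENNReal.ofReal (|x - y| ^ (-(1 + s))))
      ≤ perR s (⋃ k : ℕ, Set.Ioo (a ^ (2 * k + 1)) (a ^ (2 * k))) := by
    have h := lintegral_biUnion_finset (μ := volume) (s := Finset.range N)
        (t := fun k : ℕ => Set.Ioo (a ^ (2 * k + 1)) (a ^ (2 * k)))
        hdisj (fun k _ => measurableSet_Ioo)
        (fun x => ∫⁻ y in (⋃ j : ℕ, Set.Ioo (a ^ (2 * j + 1)) (a ^ (2 * j)))ᶜ,
            ENNReal.ofReal (|x - y| ^ (-(1 + s))))
    rw [← h]
    exact lintegral_mono' (Measure.restrict_mono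
      (Set.iUnion₂_subset fun k _ =>
        Set.subset_iUnion (fun k : ℕ => Set.Ioo (a ^ (2 * k + 1)) (a ^ (2 * k))) k)
      le_rfl) le_rfl
  have hchain : ENNReal.ofReal ((N:ℝ)/8) ≤ ENNReal.ofReal (1 - s) *
      perR s (⋃ k : ℕ, Set.Ioo (a ^ (2 * k + 1)) (a ^ (2 * k))) := by
    calc ENNReal.ofReal ((N:ℝ)/8)
        = ∑ _k ∈ Finset.range N, ENNReal.ofReal ((1:ℝ)/8) := by
          rw [Finset.sum_const, Finset.card_range, nsmul_eq_mul,
            ← ENNReal.ofReal_natCast N, ← ENNReal.ofReal_mul (Nat.cast_nonneg N)]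
          congr 1
          ring
      _ ≤ ∑ k ∈ Finset.range N, ENNReal.ofReal (1 - s) *
            ENNReal.ofReal ((2:ℝ) ^ (-(1+s)) * (a ^ (2 * k + 1) * (1 - a)) ^ (1 - s) / (1 - s)) := by
          refine Finset.sum_le_sum fun k hk => ?_
          rw [← ENNReal.ofReal_mul (by linarith : (0:ℝ) ≤ 1 - s)]
          apply ENNReal.ofReal_le_ofReal
          rw [show (1 - s) * ((2:ℝ) ^ (-(1+s)) * (a ^ (2 * k + 1) * (1 - a)) ^ (1 - s) / (1 - s))
              = (2:ℝ) ^ (-(1+s)) * (a ^ (2 * k + 1) * (1 - a)) ^ (1 - s) by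
            have h1s : (1:ℝ) - s ≠ 0 := by intro h; linarith
            field_simp]
          exact hBk k (Finset.mem_range.1 hk)
      _ ≤ ∑ k ∈ Finset.range N, ENNReal.ofReal (1 - s) *
            (∫⁻ x in Set.Ioo (a ^ (2 * k + 1)) (a ^ (2 * k)),
              ∫⁻ y in (⋃ j : ℕ, Set.Ioo (a ^ (2 * j + 1)) (a ^ (2 * j)))ᶜ,
                ENNReal.ofReal (|x - y| ^ (-(1 + s)))) :=
          Finset.sum_le_sum fun k _ =>
            mul_le_mul_right (key_bound ha0 ha1 hs0 hs1 k) _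
      _ = ENNReal.ofReal (1 - s) * ∑ k ∈ Finset.range N,
            ∫⁻ x in Set.Ioo (a ^ (2 * k + 1)) (a ^ (2 * k)),
              ∫⁻ y in (⋃ j : ℕ, Set.Ioo (a ^ (2 * j + 1)) (a ^ (2 * j)))ᶜ,
                ENNReal.ofReal (|x - y| ^ (-(1 + s))) := (Finset.mul_sum _ _ _).symm
      _ ≤ ENNReal.ofReal (1 - s) *
            perR s (⋃ k : ℕ, Set.Ioo (a ^ (2 * k + 1)) (a ^ (2 * k))) :=
          mul_le_mul_right hsum _
  refine lt_of_lt_of_le ?_ hchain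
  rw [ENNReal.ofReal_lt_ofReal_iff (by linarith : (0:ℝ) < (N:ℝ)/8)]
  linarith
end Aux
end
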